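/- Let p be an odd prime and r ≥ 1. Suppose a_0,...,a_{r-1} ∈ ℕ and e_0,...,e_{r-1} ∈ {0,1}, not all zero, satisfy ((p^r - 1)/2) divides Σ_k p^k (a_k + e_k). Then Σ_k (e_k + 2 a_k) ≥ r(p - 2), with equality forcing e_k = 1 and a_k = (p-3)/2 for all k. -/

import Mathlib

private lemma geom_aux (p : ℕ) (hp : 1 ≤ p) (r : ℕ) :
    ∑ k ∈ Finset.range r, p ^ k * (p - 1) = p ^ r - 1 := by
  induction r with
  | zero => simp
  | succ n ih =>
    rw [Finset.sum_range_succ, ih, pow_succ]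
    have hA : 1 ≤ p ^ n := Nat.one_le_pow _ _ hp
    have hmul : p ^ n * (p - 1) + p ^ n = p ^ n * p := by
      rw [← Nat.mul_succ]
      congr 1
      omega
    omega

private lemma key_lemma (p : ℕ) (hp : 2 ≤ p) :
    ∀ n r (c : Fin r → ℕ), (∑ k, c k) = n → (∃ k, c k ≠ 0) →
      ((p ^ r - 1) ∣ ∑ k : Fin r, p ^ (k : ℕ) * c k) →
      r * (p - 1) ≤ ∑ k, c k ∧ ((∑ k, c k) = r * (p - 1) → ∀ k, c k = p - 1) := by
  intro n
  induction n using Nat.strong_induction_on with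
  | _ n ih =>
  intro r c hsum hne hdvd
  by_cases hsmall : ∀ j, c j < p
  · -- base case: all entries < p
    have hX_le : ∑ k : Fin r, p ^ (k : ℕ) * c k ≤ p ^ r - 1 := by
      calc ∑ k : Fin r, p ^ (k : ℕ) * c k
          ≤ ∑ k : Fin r, p ^ (k : ℕ) * (p - 1) :=
            Finset.sum_le_sum (fun j _ => Nat.mul_le_mul_left _ (by have := hsmall j; omega))
        _ = p ^ r - 1 := by
            rw [Fin.sum_univ_eq_sum_range (fun k => p ^ k * (p - 1))]
            exact geom_aux p (by omega) r
    obtain ⟨k0, hk0⟩ := hne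
    have hXpos : 0 < ∑ k : Fin r, p ^ (k : ℕ) * c k := by
      have hpk : 0 < p ^ (k0 : ℕ) := pow_pos (by omega) _
      have h1 : 0 < p ^ (k0 : ℕ) * c k0 := Nat.mul_pos hpk (Nat.pos_of_ne_zero hk0)
      exact lt_of_lt_of_le h1 (Finset.single_le_sum (f := fun i : Fin r => p ^ (i : ℕ) * c i)
        (fun i _ => Nat.zero_le _) (Finset.mem_univ k0))
    have hXeq : ∑ k : Fin r, p ^ (k : ℕ) * c k = p ^ r - 1 :=
      Nat.le_antisymm hX_le (Nat.le_of_dvd hXpos hdvd)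
    have hall : ∀ j, c j = p - 1 := by
      intro j
      by_contra hj
      have hjlt : c j < p - 1 := by have := hsmall j; omega
      have hstrict : ∑ k : Fin r, p ^ (k : ℕ) * c k < ∑ k : Fin r, p ^ (k : ℕ) * (p - 1) :=
        Finset.sum_lt_sum (fun i _ => Nat.mul_le_mul_left _ (by have := hsmall i; omega))
          ⟨j, Finset.mem_univ j, by
            have hpj : 0 < p ^ (j : ℕ) := pow_pos (by omega) _
            exact Nat.mul_lt_mul_of_pos_left hjlt hpj⟩
      rw [Fin.sum_univ_eq_sum_range (fun k => p ^ k * (p - 1)), geom_aux p (by omega) r] at hstrict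
      omega
    have hceq : ∑ k, c k = r * (p - 1) := by
      rw [Finset.sum_congr rfl (fun j _ => hall j)]
      simp [Finset.sum_const, Finset.card_univ, mul_comm]
    exact ⟨le_of_eq hceq.symm, fun _ j => hall j⟩
  · -- inductive step: perform a carry
    push_neg at hsmall
    obtain ⟨k, hk⟩ := hsmall
    have hr0 : 0 < r := k.pos
    set k' : Fin r := ⟨((k : ℕ) + 1) % r, Nat.mod_lt _ hr0⟩ with hk'def
    set c' : Fin r → ℕ :=
      fun j => (c j - if j = k then p else 0) + (if j = k' then 1 else 0) with hc'def
    -- sums of the indicator functions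
    have hind1 : ∑ j : Fin r, (if j = k then p else 0) = p := by
      simp [Finset.sum_ite_eq']
    have hind2 : ∑ j : Fin r, (if j = k' then 1 else 0) = 1 := by
      simp [Finset.sum_ite_eq']
    have hle1 : ∀ j ∈ Finset.univ, (if j = k then p else 0) ≤ c j := by
      intro j _
      by_cases h : j = k
      · subst h; simp [hk]
      · simp [h]
    have hsumc' : ∑ j, c' j = ((∑ j, c j) - p) + 1 := by
      rw [hc'def]
      rw [Finset.sum_add_distrib, Finset.sum_tsub_distrib _ hle1, hind1, hind2]
    have hck_le : c k ≤ ∑ j, c j :=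
      Finset.single_le_sum (f := c) (fun i _ => Nat.zero_le _) (Finset.mem_univ k)
    have hp_le_sum : p ≤ ∑ j, c j := le_trans hk hck_le
    -- weighted sums
    have hwle : ∀ j : Fin r, j ∈ Finset.univ → p ^ (j : ℕ) * (if j = k then p else 0) ≤ p ^ (j : ℕ) * c j := by
      intro j hj
      exact Nat.mul_le_mul_left _ (hle1 j hj)
    have hwind1 : ∑ j : Fin r, p ^ (j : ℕ) * (if j = k then p else 0) = p ^ ((k : ℕ) + 1) := by
      simp only [mul_ite, mul_zero]
      rw [Finset.sum_ite_eq']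
      simp [pow_succ]
    have hwind2 : ∑ j : Fin r, p ^ (j : ℕ) * (if j = k' then 1 else 0) = p ^ ((k' : ℕ)) := by
      simp only [mul_ite, mul_zero, mul_one]
      rw [Finset.sum_ite_eq']
      simp
    have hpk1_le : p ^ ((k : ℕ) + 1) ≤ ∑ j : Fin r, p ^ (j : ℕ) * c j := by
      have h1 : p ^ ((k : ℕ) + 1) ≤ p ^ (k : ℕ) * c k := by
        rw [pow_succ]
        exact Nat.mul_le_mul_left _ hk
      exact le_trans h1 (Finset.single_le_sum (f := fun i : Fin r => p ^ (i : ℕ) * c i)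
        (fun i _ => Nat.zero_le _) (Finset.mem_univ k))
    have hwsum : ∑ j : Fin r, p ^ (j : ℕ) * c' j
        = ((∑ j : Fin r, p ^ (j : ℕ) * c j) - p ^ ((k : ℕ) + 1)) + p ^ ((k' : ℕ)) := by
      rw [hc'def]
      simp only [Nat.mul_add, Nat.mul_sub]
      rw [Finset.sum_add_distrib, Finset.sum_tsub_distrib _ hwle, hwind1, hwind2]
    -- divisibility is preserved
    have hdvd' : (p ^ r - 1) ∣ ∑ j : Fin r, p ^ (j : ℕ) * c' j := by
      rcases Nat.lt_or_ge ((k : ℕ) + 1) r with hlt | hge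
      · have hk'val : (k' : ℕ) = (k : ℕ) + 1 := by
          simp [hk'def, Nat.mod_eq_of_lt hlt]
        rw [hwsum, hk'val]
        have : ((∑ j : Fin r, p ^ (j : ℕ) * c j) - p ^ ((k : ℕ) + 1)) + p ^ ((k : ℕ) + 1)
            = ∑ j : Fin r, p ^ (j : ℕ) * c j := by omega
        rw [this]
        exact hdvd
      · have hkr : (k : ℕ) + 1 = r := by have := k.isLt; omega
        have hk'val : (k' : ℕ) = 0 := by
          simp [hk'def, hkr]
        rw [hwsum, hk'val, hkr, pow_zero]
        have hd : (p ^ r - 1) ∣ (∑ j : Fin r, p ^ (j : ℕ) * c j) - (p ^ r - 1) :=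
          Nat.dvd_sub hdvd dvd_rfl
        have hpr1 : 1 ≤ p ^ r := Nat.one_le_pow _ _ (by omega)
        have heq2 : (∑ j : Fin r, p ^ (j : ℕ) * c j) - (p ^ r - 1)
            = ((∑ j : Fin r, p ^ (j : ℕ) * c j) - p ^ r) + 1 := by
          rw [hkr] at hpk1_le
          omega
        rw [heq2] at hd
        exact hd
    have hne' : ∃ j, c' j ≠ 0 := by
      refine ⟨k', ?_⟩
      simp [hc'def]
    have hlt : ∑ j, c' j < n := by
      rw [hsumc', ← hsum]
      omega
    obtain ⟨h1, _⟩ := ih (∑ j, c' j) (by omega) r c' rfl hne' hdvd'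
    have hrel : ∑ j, c j = (∑ j, c' j) + (p - 1) := by
      rw [hsumc']
      omega
    constructor
    · omega
    · intro heq
      omega

/-- If `p` is an odd prime, `a_k ∈ ℕ` and `e_k ∈ {0,1}`, not all zero, with
`(p^r - 1)/2` dividing `∑ p^k (a_k + e_k)`, then `∑ (e_k + 2 a_k) ≥ r (p - 2)`,
with equality forcing `e_k = 1` and `a_k = (p - 3)/2` for all `k`. -/
theorem stmt_15 (p r : ℕ) (hp : p.Prime) (hodd : Odd p) (hr : 1 ≤ r)
    (a e : Fin r → ℕ) (he : ∀ k, e k ≤ 1)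
    (hne : ∃ k, a k ≠ 0 ∨ e k ≠ 0)
    (hdvd : ((p ^ r - 1) / 2) ∣ ∑ k : Fin r, p ^ (k : ℕ) * (a k + e k)) :
    r * (p - 2) ≤ ∑ k, (e k + 2 * a k) ∧
      (∑ k, (e k + 2 * a k) = r * (p - 2) → ∀ k, e k = 1 ∧ a k = (p - 3) / 2) := by
  obtain ⟨m, hm⟩ := hodd
  have hp2 := hp.two_le
  have hp3 : 3 ≤ p := by omega
  set c : Fin r → ℕ := fun k => 2 * (a k + e k) with hc
  have hne' : ∃ k, c k ≠ 0 := by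
    obtain ⟨k, hk⟩ := hne
    refine ⟨k, ?_⟩
    simp only [hc]
    omega
  have hpr_odd : Odd (p ^ r) := by
    refine Odd.pow ⟨m, hm⟩
  have h2 : 2 * ((p ^ r - 1) / 2) = p ^ r - 1 := by
    obtain ⟨t, ht⟩ := hpr_odd
    omega
  have hdvd' : (p ^ r - 1) ∣ ∑ k : Fin r, p ^ (k : ℕ) * c k := by
    have hX : ∑ k : Fin r, p ^ (k : ℕ) * c k
        = 2 * ∑ k : Fin r, p ^ (k : ℕ) * (a k + e k) := by
      rw [Finset.mul_sum]
      exact Finset.sum_congr rfl (fun j _ => by simp only [hc]; ring)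
    rw [hX, ← h2]
    exact Nat.mul_dvd_mul_left 2 hdvd
  obtain ⟨h1, h2'⟩ := key_lemma p hp2 (∑ k, c k) r c rfl hne' hdvd'
  have hsplit : (∑ k, c k) = (∑ k, (e k + 2 * a k)) + ∑ k, e k := by
    rw [← Finset.sum_add_distrib]
    exact Finset.sum_congr rfl (fun j _ => by simp only [hc]; ring)
  have he_le : ∑ k, e k ≤ r := by
    calc ∑ k, e k ≤ ∑ _k : Fin r, 1 := Finset.sum_le_sum (fun j _ => he j)
      _ = r := by simp
  have hmulrel : r * (p - 1) = r * (p - 2) + r := by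
    have hpe : p - 1 = (p - 2) + 1 := by omega
    rw [hpe, Nat.mul_add, mul_one]
  constructor
  · omega
  · intro heq
    have hsum_e : ∑ k, e k = r := by omega
    have hceq : ∑ k, c k = r * (p - 1) := by omega
    have hall := h2' hceq
    intro j
    have hcj : 2 * (a j + e j) = p - 1 := hall j
    have hej : e j = 1 := by
      by_contra hj
      have hjlt : e j < 1 := by have := he j; omega
      have hstrict : ∑ k, e k < ∑ _k : Fin r, 1 :=
        Finset.sum_lt_sum (fun i _ => he i) ⟨j, Finset.mem_univ j, hjlt⟩
      simp at hstrict
      omega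
    exact ⟨hej, by omega⟩
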